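/- arXiv:1311.4997 — 4 statements merged into one kernel-verified Lean document; each statement's English description precedes it below -/
import Mathlib

section
/- Let σ* be a group word in three variables with the properties: (i) σ*(a,b,c) = e whenever one of a,b,c is the identity, in every group; (ii) for some group and some triple, σ* is nonidentity. Define formulas on 6-tuples: φ₀(x̄,ȳ) says y₅⁻¹ x₀ y₅ = x₂; φ₁(x̄,ȳ) says x₅⁻¹ y₁ x₅ = y₃ ∧ x₅⁻¹ y₄ x₅ = y₄; ψ(x̄,ȳ,z̄) says σ*(x₀,y₁,z₄) = e ∧ σ*(x₂,y₃,z₄) ≠ e. Then there are no group G and 6-tuples ā₀, ā₁, ā₂, ā₃ ∈ G⁶ such that G ⊨ φ₀[ā₀,ā₁], G ⊨ φ₁[ā₁,ā₂], G ⊨ φ₁[ā₁,ā₃], and G ⊨ ψ[ā₀,ā₂,ā₃]. -/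
/-- If `w` is a group word in three variables which vanishes whenever one of its
arguments is the identity (i), and is somewhere nonidentity (ii), then there is no group `G`
and 6-tuples `ā₀,ā₁,ā₂,ā₃ ∈ G⁶` satisfying `φ₀[ā₀,ā₁]`, `φ₁[ā₁,ā₂]`, `φ₁[ā₁,ā₃]` and
`ψ[ā₀,ā₂,ā₃]`, where `φ₀(x̄,ȳ) ≡ y₅⁻¹x₀y₅ = x₂`,
`φ₁(x̄,ȳ) ≡ x₅⁻¹y₁x₅ = y₃ ∧ x₅⁻¹y₄x₅ = y₄`, and
`ψ(x̄,ȳ,z̄) ≡ w(x₀,y₁,z₄) = e ∧ w(x₂,y₃,z₄) ≠ e`. -/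
theorem no_olive_configuration_in_groups (w : FreeGroup (Fin 3))
    (hw1 : ∀ (G : Type) [Group G] (a b c : G),
      a = 1 ∨ b = 1 ∨ c = 1 → FreeGroup.lift ![a, b, c] w = 1)
    (hw2 : ∃ (G : Type) (_ : Group G) (a b c : G), FreeGroup.lift ![a, b, c] w ≠ 1)
    (G : Type) [Group G] (a : Fin 4 → Fin 6 → G) :
    ¬ ((a 1 5)⁻¹ * a 0 0 * a 1 5 = a 0 2 ∧
       ((a 1 5)⁻¹ * a 2 1 * a 1 5 = a 2 3 ∧ (a 1 5)⁻¹ * a 2 4 * a 1 5 = a 2 4) ∧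
       ((a 1 5)⁻¹ * a 3 1 * a 1 5 = a 3 3 ∧ (a 1 5)⁻¹ * a 3 4 * a 1 5 = a 3 4) ∧
       (FreeGroup.lift ![a 0 0, a 2 1, a 3 4] w = 1 ∧
        FreeGroup.lift ![a 0 2, a 2 3, a 3 4] w ≠ 1)) := by
  rintro ⟨h0, ⟨h21, _⟩, ⟨_, h34⟩, hv, hnv⟩
  apply hnv
  set g := a 1 5 with hg
  let φ : G →* G := (MulAut.conj g⁻¹).toMonoidHom
  have key : φ.comp (FreeGroup.lift ![a 0 0, a 2 1, a 3 4])
      = FreeGroup.lift ![a 0 2, a 2 3, a 3 4] := by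
    apply FreeGroup.ext_hom
    intro i
    fin_cases i <;>
      simp only [MonoidHom.comp_apply, FreeGroup.lift_apply_of, Matrix.cons_val_zero,
        Matrix.cons_val_one, Matrix.head_cons, Matrix.cons_val_two, Matrix.tail_cons] <;>
      simp only [φ, MulEquiv.coe_toMonoidHom, MulAut.conj_apply, inv_inv] <;>
      [exact h0; exact h21; exact h34]
  have := DFunLike.congr_fun key w
  simp only [MonoidHom.comp_apply] at this
  rw [← this, hv]
  simp
end

section
/- Let X be a set and Γ a set of relations on the free group F(X), each of the form σ*(x,y,z) = e for triples (x,y,z) of distinct elements of X, where σ*(a,b,c) = e holds in any group whenever one of a,b,c is the identity. Let G be the group presented by generators X and relations Γ. If Y ⊆ X is such that no relation σ*(x,y,z) = e in Γ has all of x, y, z belonging to Y, then the images of the elements of Y generate a free subgroup of G, freely generated by (the images of) Y. -/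
/-- The set of relations `σ*(x,y,z) = e` for triples `(x,y,z) ∈ T`, as words
in the free group on `X`: the word `w` in three variables is substituted with the
generators corresponding to the components of the triple. -/
def tripleRels (X : Type*) (w : FreeGroup (Fin 3)) (T : Set (X × X × X)) :
    Set (FreeGroup X) :=
  {r | ∃ t ∈ T, r = FreeGroup.lift ![FreeGroup.of t.1, FreeGroup.of t.2.1,
      FreeGroup.of t.2.2] w}

/-- Let `G = ⟨X | Γ⟩` where `Γ` consists of relations `σ*(x,y,z) = e` for
triples of distinct elements of `X`, and `σ*` vanishes whenever one argument is the
identity. If `Y ⊆ X` is such that no relation of `Γ` has all three of its generators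
in `Y`, then the images of the elements of `Y` freely generate a free subgroup of `G`,
i.e. the canonical map `FreeGroup Y → G` is injective. -/
theorem free_subgroup_of_presented (X : Type) (w : FreeGroup (Fin 3))
    (hw : ∀ (G : Type) [Group G] (a b c : G),
      a = 1 ∨ b = 1 ∨ c = 1 → FreeGroup.lift ![a, b, c] w = 1)
    (T : Set (X × X × X))
    (hT : ∀ t ∈ T, t.1 ≠ t.2.1 ∧ t.1 ≠ t.2.2 ∧ t.2.1 ≠ t.2.2)
    (Y : Set X)
    (hY : ∀ t ∈ T, ¬ (t.1 ∈ Y ∧ t.2.1 ∈ Y ∧ t.2.2 ∈ Y)) :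
    Function.Injective
      (FreeGroup.lift (fun y : Y =>
        (PresentedGroup.of (rels := tripleRels X w T) (y : X)))) := by
  classical
  set f : X → FreeGroup Y := fun x => if h : x ∈ Y then FreeGroup.of (⟨x, h⟩ : Y) else 1
    with hf
  have hrels : ∀ r ∈ tripleRels X w T, FreeGroup.lift f r = 1 := by
    rintro r ⟨t, ht, rfl⟩
    have hcomp : (FreeGroup.lift f)
        (FreeGroup.lift ![FreeGroup.of t.1, FreeGroup.of t.2.1, FreeGroup.of t.2.2] w)
        = FreeGroup.lift ![f t.1, f t.2.1, f t.2.2] w := by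
      have : (FreeGroup.lift f).comp
          (FreeGroup.lift ![FreeGroup.of t.1, FreeGroup.of t.2.1, FreeGroup.of t.2.2])
          = FreeGroup.lift ![f t.1, f t.2.1, f t.2.2] := by
        apply FreeGroup.ext_hom
        intro i
        fin_cases i <;> simp
      exact DFunLike.congr_fun this w
    rw [hcomp]
    apply hw
    have := hY t ht
    by_cases h1 : t.1 ∈ Y
    · by_cases h2 : t.2.1 ∈ Y
      · right; right
        have h3 : t.2.2 ∉ Y := fun h3 => this ⟨h1, h2, h3⟩
        simp [hf, h3]
      · right; left; simp [hf, h2]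
    · left; simp [hf, h1]
  set g : PresentedGroup (tripleRels X w T) →* FreeGroup Y := PresentedGroup.toGroup hrels
  have hleft : ∀ u, g (FreeGroup.lift (fun y : Y =>
      (PresentedGroup.of (rels := tripleRels X w T) (y : X))) u) = u := by
    intro u
    have : g.comp (FreeGroup.lift (fun y : Y =>
        (PresentedGroup.of (rels := tripleRels X w T) (y : X)))) = MonoidHom.id _ := by
      apply FreeGroup.ext_hom
      intro y
      simp only [MonoidHom.comp_apply, FreeGroup.lift_apply_of, MonoidHom.id_apply]
      rw [PresentedGroup.toGroup.of]
      simp [hf, y.2]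
    exact DFunLike.congr_fun this u
  intro a b hab
  rw [← hleft a, ← hleft b, hab]
end

section
/- Let X be a set, σ* a group word in three variables with σ*(a,b,c) = e whenever one of a,b,c is the identity, and Γ a set of relations σ*(x,y,z) = e with x,y,z distinct elements of X. Let G = ⟨X | Γ⟩. Then the images in G of distinct elements of X are distinct (i.e., X embeds into G). -/
/-- If `σ*` is a group word in three variables vanishing whenever one of its
arguments is the identity, and `Γ` is a set of relations `σ*(x,y,z) = e` with `x,y,z`
distinct elements of `X`, then the images in `G = ⟨X | Γ⟩` of distinct elements of `X`
are distinct, i.e. `X` embeds into `G`. -/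
theorem generators_distinct_in_presented (X : Type) (w : FreeGroup (Fin 3))
    (hw : ∀ (G : Type) [Group G] (a b c : G),
      a = 1 ∨ b = 1 ∨ c = 1 → FreeGroup.lift ![a, b, c] w = 1)
    (T : Set (X × X × X))
    (hT : ∀ t ∈ T, t.1 ≠ t.2.1 ∧ t.1 ≠ t.2.2 ∧ t.2.1 ≠ t.2.2) :
    Function.Injective
      (fun x : X => (PresentedGroup.of (rels := tripleRels X w T) x)) := by
  intro x y hxy
  by_contra hne
  classical
  -- map to Multiplicative ℤ sending x to 1, everything else to 0
  set f : X → Multiplicative ℤ :=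
    fun z => if z = x then Multiplicative.ofAdd 1 else 1 with hf
  have hrels : ∀ r ∈ tripleRels X w T, FreeGroup.lift f r = 1 := by
    rintro r ⟨t, ht, rfl⟩
    have key : (FreeGroup.lift f)
        (FreeGroup.lift ![FreeGroup.of t.1, FreeGroup.of t.2.1, FreeGroup.of t.2.2] w)
        = FreeGroup.lift ![f t.1, f t.2.1, f t.2.2] w := by
      have := FreeGroup.lift_unique (β := Multiplicative ℤ)
        ((FreeGroup.lift f).comp
          (FreeGroup.lift ![FreeGroup.of t.1, FreeGroup.of t.2.1, FreeGroup.of t.2.2]))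
        (f := ![f t.1, f t.2.1, f t.2.2]) ?_ (x := w)
      · exact this
      · intro i
        fin_cases i <;> simp
    rw [key]
    apply hw
    obtain ⟨h12, h13, h23⟩ := hT t ht
    by_cases h1 : t.1 = x
    · right; left
      simp only [hf, Matrix.cons_val_one, Matrix.head_cons]
      rw [if_neg (by rw [← h1]; exact h12.symm)]
    · left
      simp only [hf, Matrix.cons_val_zero]
      rw [if_neg h1]
  have hofx := PresentedGroup.toGroup.of hrels (x := x)
  have hofy := PresentedGroup.toGroup.of hrels (x := y)
  rw [show PresentedGroup.of y = PresentedGroup.of x from hxy.symm, hofx] at hofy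
  have : (Multiplicative.ofAdd (1:ℤ)) = 1 := by
    simp only [hf, if_pos trivial, eq_self_iff_true] at hofy; rwa [if_neg (show ¬ y = x from fun h => hne h.symm)] at hofy
  exact one_ne_zero (ofAdd_eq_one.mp this)
end

section
/- Let K be a finite group. Then K embeds into the symmetric group Sym(K) (acting on the underlying set of K), and for every partial isomorphism π between subgroups A, B of K there exists a permutation z ∈ Sym(K) such that z⁻¹ a z = π(a) for all a ∈ A, where K is identified with its image under the right-regular (Cayley) embedding. In particular, every finite group K with a family of partial isomorphisms embeds into a finite group in which each of these partial isomorphisms is realized by conjugation. -/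
section Aux

variable {K : Type*} [Group K]

/-- Equivariant coset decomposition `K ≃ (K ⧸ A) × A`. -/
noncomputable def myCosetEquiv (A : Subgroup K) : K ≃ (K ⧸ A) × A where
  toFun x := (↑x, ⟨(Quotient.out (↑x : K ⧸ A))⁻¹ * x, by
    rw [← QuotientGroup.eq]
    simp⟩)
  invFun p := Quotient.out p.1 * (p.2 : K)
  left_inv x := by simp
  right_inv p := by
    obtain ⟨q, a⟩ := p
    have h1 : ((Quotient.out q * (a : K) : K) : K ⧸ A) = q := by
      rw [QuotientGroup.mk_mul_of_mem _ a.2]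
      simp
    ext
    · exact h1
    · simp [h1]

lemma myCosetEquiv_mul (A : Subgroup K) (x : K) (a : A) :
    myCosetEquiv A (x * a) = ((myCosetEquiv A x).1, (myCosetEquiv A x).2 * a) := by
  have h1 : ((x * a : K) : K ⧸ A) = (x : K ⧸ A) := QuotientGroup.mk_mul_of_mem _ a.2
  ext
  · exact h1
  · simp [myCosetEquiv, h1, mul_assoc]

lemma myCosetEquiv_symm (A : Subgroup K) (q : K ⧸ A) (a : A) :
    (myCosetEquiv A).symm (q, a) = Quotient.out q * (a : K) := rfl

end Aux

/-- Cayley embedding realizing partial isomorphisms: every finite group `K`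
embeds into the (finite) symmetric group `Sym(K)` via an injective homomorphism `ρ`, in such
a way that for every partial isomorphism `π : A ≅ B` between subgroups of `K` there is a
permutation `z ∈ Sym(K)` with `z⁻¹ (ρ a) z = ρ (π a)` for all `a ∈ A`. -/
theorem cayley_realizes_partial_isomorphisms (K : Type*) [Group K] [Finite K] :
    ∃ ρ : K →* Equiv.Perm K,
      Function.Injective ρ ∧
      ∀ (A B : Subgroup K) (π : A ≃* B),
        ∃ z : Equiv.Perm K, ∀ a : A, z⁻¹ * ρ a * z = ρ (π a) := by
  -- the right-regular representation: ρ k is the permutation x ↦ x * k⁻¹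
  refine ⟨MonoidHom.mk' (fun k => Equiv.mulRight k⁻¹) (by
      intro k₁ k₂
      ext x
      simp [mul_assoc]), ?_, ?_⟩
  · intro k₁ k₂ h
    have := congrArg (fun (p : Equiv.Perm K) => p 1) h
    simpa using this
  · intro A B π
    -- cardinalities of quotients agree
    have hAB : Nat.card A = Nat.card B := Nat.card_congr π.toEquiv
    have hq : Nat.card (K ⧸ B) = Nat.card (K ⧸ A) := by
      have h1 : Nat.card (K ⧸ A) * Nat.card A = Nat.card K :=
        (Subgroup.card_eq_card_quotient_mul_card_subgroup A).symm
      have h2 : Nat.card (K ⧸ B) * Nat.card B = Nat.card K :=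
        (Subgroup.card_eq_card_quotient_mul_card_subgroup B).symm
      have hpos : 0 < Nat.card B := Nat.card_pos
      have : Nat.card (K ⧸ B) * Nat.card B = Nat.card (K ⧸ A) * Nat.card B := by
        rw [h2, ← hAB, h1]
      exact Nat.eq_of_mul_eq_mul_right hpos this
    obtain ⟨σ⟩ : Nonempty (K ⧸ B ≃ K ⧸ A) := Finite.card_eq.mp hq
    -- build the intertwining permutation
    let z : Equiv.Perm K :=
      (myCosetEquiv B).trans ((σ.prodCongr π.symm.toEquiv).trans (myCosetEquiv A).symm)
    have hz : ∀ (x : K) (b : B), z (x * b) = z x * (π.symm b : K) := by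
      intro x b
      show (myCosetEquiv A).symm ((σ.prodCongr π.symm.toEquiv) (myCosetEquiv B (x * b)))
        = _
      rw [myCosetEquiv_mul]
      simp only [Equiv.prodCongr_apply, Prod.map, MulEquiv.coe_toEquiv, map_mul]
      rw [myCosetEquiv_symm]
      show _ = (myCosetEquiv A).symm ((σ.prodCongr π.symm.toEquiv) (myCosetEquiv B x)) * _
      simp only [Equiv.prodCongr_apply, Prod.map, MulEquiv.coe_toEquiv]
      rw [myCosetEquiv_symm]
      simp [mul_assoc]
    refine ⟨z, ?_⟩
    intro a
    ext x
    simp only [MonoidHom.mk'_apply, Equiv.Perm.mul_apply, Equiv.coe_mulRight]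
    -- goal: z⁻¹ (z x * a⁻¹) = x * (π a)⁻¹
    have key : z (x * ((π a : K))⁻¹) = z x * (a : K)⁻¹ := by
      have : ((π a : K))⁻¹ = ((π a)⁻¹ : B) := rfl
      rw [this, hz]
      congr 1
      simp
    calc z⁻¹ (z x * (a : K)⁻¹) = z⁻¹ (z (x * ((π a : K))⁻¹)) := by rw [key]
      _ = x * ((π a : K))⁻¹ := by simp
end
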